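/- Birth-death Cheeger criterion: Consider a birth-death chain on ℤ₊ with birth rates b_i > 0, death rates a_i > 0 (a_0 = 0), reversible measure π, and J(i,j) = π_i q_{ij}. Fix α ≥ 0 and set J^{(α)}(i,j) = π_i q_{ij}/((a_i+b_i)∨(a_j+b_j))^α for |i−j|=1. If there is c > 0 such that π_i a_i / ((a_i+b_i)∨(a_{i−1}+b_{i−1}))^α ≥ c ∑_{j≥i} π_j for all i ≥ 1, then k^{(α)'} := inf_{0<π(A)≤1/2} J^{(α)}(A×Aᶜ)/π(A) ≥ c. Conversely, if k^{(α)'} > 0 then such a constant c exists. -/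

import Mathlib

open Set ENNReal

/-- Theorem 4.1(1): Cheeger criterion for birth-death chains. With
`J^{(α)}(i,j) = π_i q_{ij}/((a_i+b_i)∨(a_j+b_j))^α`, the rescaled Cheeger
constant `k^{(α)'}` is at least `c > 0` provided
`π_i a_i / ((a_i+b_i)∨(a_{i−1}+b_{i−1}))^α ≥ c ∑_{j≥i} π_j` for all `i ≥ 1`;
conversely, `k^{(α)'} > 0` implies such a `c` exists. -/
theorem stmt13 (a b : ℕ → ℝ) (π : ℕ → ℝ) (α : ℝ) (hα : 0 ≤ α)
    (ha0 : a 0 = 0) (hapos : ∀ i, 1 ≤ i → 0 < a i) (hbpos : ∀ i, 0 < b i)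
    (hπpos : ∀ i, 0 < π i) (hπsum : Summable π) (hπ1 : (∑' i, π i) = 1)
    (hdb : ∀ i, π i * b i = π (i + 1) * a (i + 1))
    (Jα : ℕ → ℕ → ℝ)
    (hJα : ∀ i j, Jα i j =
      if j = i + 1 then π i * b i / (max (a i + b i) (a j + b j)) ^ α
      else if i = j + 1 then π i * a i / (max (a i + b i) (a j + b j)) ^ α
      else 0)
    (flux πm : Set ℕ → ℝ≥0∞)
    (hflux : ∀ A, flux A = ∑' i : A, ∑' j : ↥Aᶜ, ENNReal.ofReal (Jα i j))
    (hπm : ∀ A : Set ℕ, πm A = ∑' i : A, ENNReal.ofReal (π i))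
    (k' : ℝ≥0∞)
    (hk' : k' = ⨅ A ∈ {A : Set ℕ | 0 < πm A ∧ πm A ≤ 1 / 2}, flux A / πm A) :
    (∀ c : ℝ, 0 < c →
      (∀ i, 1 ≤ i →
        c * (∑' j, if i ≤ j then π j else 0)
          ≤ π i * a i / (max (a i + b i) (a (i - 1) + b (i - 1))) ^ α) →
      ENNReal.ofReal c ≤ k') ∧
    (0 < k' → ∃ c : ℝ, 0 < c ∧ ∀ i, 1 ≤ i →
      c * (∑' j, if i ≤ j then π j else 0)
        ≤ π i * a i / (max (a i + b i) (a (i - 1) + b (i - 1))) ^ α) := by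
  classical
  set T : ℕ → ℝ := fun i => ∑' j, if i ≤ j then π j else 0 with hTdef
  set w : ℕ → ℝ := fun i =>
    π i * a i / (max (a i + b i) (a (i - 1) + b (i - 1))) ^ α with hwdef
  have hπ0 : ∀ i, 0 ≤ π i := fun i => (hπpos i).le
  have hTsum : ∀ i, Summable (fun j => if i ≤ j then π j else 0) := fun i =>
    Summable.of_nonneg_of_le
      (fun j => by by_cases h : i ≤ j <;> simp [h, hπ0 j])
      (fun j => by by_cases h : i ≤ j <;> simp [h, hπ0 j]) hπsum
  have hT0 : ∀ i, 0 ≤ T i := fun i =>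
    tsum_nonneg (fun j => by by_cases h : i ≤ j <;> simp [h, hπ0 j])
  have hTpos : ∀ i, 0 < T i := by
    intro i
    have h : π i ≤ T i := by
      have h := Summable.le_tsum (hTsum i) i
        (fun j _ => by by_cases h : i ≤ j <;> simp [h, hπ0 j])
      simpa using h
    exact lt_of_lt_of_le (hπpos i) h
  have hwpos : ∀ i, 1 ≤ i → 0 < w i := by
    intro i hi
    have hd : 0 < max (a i + b i) (a (i - 1) + b (i - 1)) :=
      lt_max_of_lt_left (add_pos (hapos i hi) (hbpos i))
    have hd2 : 0 < (max (a i + b i) (a (i - 1) + b (i - 1))) ^ α :=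
      Real.rpow_pos_of_pos hd α
    exact div_pos (mul_pos (hπpos i) (hapos i hi)) hd2
  have hJup : ∀ i, 1 ≤ i → Jα i (i - 1) = w i := by
    intro i hi
    rw [hJα, if_neg (by omega), if_pos (by omega)]
  have hJdown : ∀ i, 1 ≤ i → Jα (i - 1) i = w i := by
    intro i hi
    have h1 : i = (i - 1) + 1 := by omega
    rw [hJα, if_pos h1]
    have hd := hdb (i - 1)
    rw [← h1] at hd
    rw [hd, max_comm, hwdef]
  have hπmdef : ∀ A : Set ℕ,
      πm A = ∑' j, A.indicator (fun j => ENNReal.ofReal (π j)) j := by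
    intro A; rw [hπm]; exact tsum_subtype A (fun j => ENNReal.ofReal (π j))
  have hπm_mono : ∀ {A B : Set ℕ}, A ⊆ B → πm A ≤ πm B := by
    intro A B hAB
    rw [hπmdef, hπmdef]
    exact ENNReal.tsum_le_tsum
      (fun j => Set.indicator_le_indicator_of_subset hAB (fun _ => zero_le) j)
  have hπm_tail : ∀ i, πm {j | i ≤ j} = ENNReal.ofReal (T i) := by
    intro i
    rw [hπmdef, hTdef]
    rw [ENNReal.ofReal_tsum_of_nonneg
      (fun j => by by_cases h : i ≤ j <;> simp [h, hπ0 j]) (hTsum i)]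
    refine tsum_congr (fun j => ?_)
    by_cases h : i ≤ j <;> simp [Set.indicator_apply, h]
  have hπm_univ : πm Set.univ = 1 := by
    rw [hπmdef]
    simp only [Set.indicator_univ]
    rw [← ENNReal.ofReal_tsum_of_nonneg hπ0 hπsum, hπ1, ENNReal.ofReal_one]
  have hπm_add : ∀ A : Set ℕ, πm A + πm Aᶜ = 1 := by
    intro A
    rw [hπmdef A, hπmdef Aᶜ, ← ENNReal.tsum_add, ← hπm_univ, hπmdef]
    refine tsum_congr fun j => ?_
    by_cases h : j ∈ A <;> simp [Set.indicator_apply, h]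
  have hhalf_eq : ENNReal.ofReal (1 / 2 : ℝ) = (1 / 2 : ℝ≥0∞) := by
    rw [ENNReal.ofReal_div_of_pos (by norm_num)]
    norm_num
  constructor
  · -- forward direction
    intro c hc hcw
    rw [hk']
    refine le_iInf₂ fun A hA => ?_
    simp only [Set.mem_setOf_eq] at hA
    obtain ⟨hA0, hA2⟩ := hA
    have hAne : πm A ≠ 0 := hA0.ne'
    have hAnet : πm A ≠ ⊤ := (lt_of_le_of_lt hA2 (by norm_num)).ne
    rw [ENNReal.le_div_iff_mul_le (Or.inl hAne) (Or.inl hAnet)]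
    have hAc_half : πm A ≤ πm Aᶜ := by
      have h1 := hπm_add A
      have h2 : (1 : ℝ≥0∞) ≤ 1 / 2 + πm Aᶜ := by
        calc (1 : ℝ≥0∞) = πm A + πm Aᶜ := h1.symm
          _ ≤ 1 / 2 + πm Aᶜ := add_le_add_left hA2 _
      have h3 : (1 : ℝ≥0∞) - 1 / 2 ≤ πm Aᶜ :=
        tsub_le_iff_right.mpr (by rwa [add_comm] at h2)
      calc πm A ≤ 1 / 2 := hA2
        _ = (1 : ℝ≥0∞) - 1 / 2 := by
            rw [ENNReal.sub_half ENNReal.one_ne_top]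
        _ ≤ πm Aᶜ := h3
    by_cases h0A : 0 ∈ A
    · -- 0 ∈ A : single boundary edge at n = sInf Aᶜ
      have hAcne : Aᶜ.Nonempty := by
        by_contra h
        rw [Set.not_nonempty_iff_eq_empty] at h
        have hAu : A = Set.univ := by
          rw [← compl_compl A, h, Set.compl_empty]
        rw [hAu, hπm_univ] at hA2
        norm_num at hA2
      set n := sInf Aᶜ with hn
      have hnAc : n ∈ Aᶜ := Nat.sInf_mem hAcne
      have hlt : ∀ m, m < n → m ∈ A := by
        intro m hm
        by_contra h
        exact absurd (Nat.sInf_le h) (not_le.mpr hm)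
      have hn1 : 1 ≤ n := by
        rcases Nat.eq_zero_or_pos n with h | h
        · exact absurd h0A (h ▸ hnAc)
        · exact h
      have hn1A : n - 1 ∈ A := hlt _ (by omega)
      have hsub : Aᶜ ⊆ {j | n ≤ j} := by
        intro j hj
        by_contra h
        exact hj (hlt j (not_le.mp h))
      have key : ENNReal.ofReal c * πm A ≤ ENNReal.ofReal (w n) := by
        calc ENNReal.ofReal c * πm A
            ≤ ENNReal.ofReal c * πm Aᶜ := mul_le_mul_right hAc_half _
          _ ≤ ENNReal.ofReal c * ENNReal.ofReal (T n) := by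
              rw [← hπm_tail]
              exact mul_le_mul_right (hπm_mono hsub) _
          _ = ENNReal.ofReal (c * T n) := (ENNReal.ofReal_mul hc.le).symm
          _ ≤ ENNReal.ofReal (w n) := ENNReal.ofReal_le_ofReal (hcw n hn1)
      refine key.trans ?_
      rw [hflux, ← hJdown n hn1]
      calc ENNReal.ofReal (Jα (n - 1) n)
          ≤ ∑' j : ↥Aᶜ, ENNReal.ofReal (Jα (n - 1) ↑j) :=
            ENNReal.le_tsum (⟨n, hnAc⟩ : ↥Aᶜ)
        _ ≤ ∑' i : ↥A, ∑' j : ↥Aᶜ, ENNReal.ofReal (Jα ↑i ↑j) :=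
            ENNReal.le_tsum (⟨n - 1, hn1A⟩ : ↥A)
    · -- 0 ∉ A : sum over left endpoints of blocks
      set B : Set ℕ := {i | i ∈ A ∧ i - 1 ∉ A} with hBdef
      have hB1 : ∀ i ∈ B, 1 ≤ i := by
        intro i hi
        rcases Nat.eq_zero_or_pos i with h | h
        · exact absurd (h ▸ hi.1) h0A
        · exact h
      have hBA : B ⊆ A := fun i hi => hi.1
      have flb : (∑' i : ↥B, ENNReal.ofReal (w ↑i)) ≤ flux A := by
        rw [hflux]
        calc ∑' i : ↥B, ENNReal.ofReal (w ↑i)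
            ≤ ∑' i : ↥B, ∑' j : ↥Aᶜ, ENNReal.ofReal (Jα ↑i ↑j) := by
              refine ENNReal.tsum_le_tsum fun i => ?_
              have h1 : (↑i : ℕ) - 1 ∈ Aᶜ := i.2.2
              have h2 := ENNReal.le_tsum (f := fun j : ↥Aᶜ => ENNReal.ofReal (Jα ↑i ↑j))
                (⟨(↑i : ℕ) - 1, h1⟩ : ↥Aᶜ)
              rwa [hJup ↑i (hB1 ↑i i.2)] at h2
          _ = ∑' i, B.indicator (fun i => ∑' j : ↥Aᶜ, ENNReal.ofReal (Jα i ↑j)) i :=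
              tsum_subtype B (fun i => ∑' j : ↥Aᶜ, ENNReal.ofReal (Jα i ↑j))
          _ ≤ ∑' i, A.indicator (fun i => ∑' j : ↥Aᶜ, ENNReal.ofReal (Jα i ↑j)) i :=
              ENNReal.tsum_le_tsum fun i =>
                Set.indicator_le_indicator_of_subset hBA (fun _ => zero_le) i
          _ = ∑' i : ↥A, ∑' j : ↥Aᶜ, ENNReal.ofReal (Jα ↑i ↑j) :=
              (tsum_subtype A (fun i => ∑' j : ↥Aᶜ, ENNReal.ofReal (Jα i ↑j))).symm
      have mlb : πm A ≤ ∑' i : ↥B, ENNReal.ofReal (T ↑i) := by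
        calc πm A = ∑' j, A.indicator (fun j => ENNReal.ofReal (π j)) j := hπmdef A
          _ ≤ ∑' j, ∑' i : ↥B,
              Set.indicator {j' | (↑i : ℕ) ≤ j'} (fun j => ENNReal.ofReal (π j)) j := by
              refine ENNReal.tsum_le_tsum fun j => ?_
              by_cases hj : j ∈ A
              · obtain ⟨m, hmspec, hmle, hmgr⟩ :
                    ∃ m, m ∉ A ∧ m ≤ j ∧ ∀ k, m < k → k ≤ j → k ∈ A := by
                  refine ⟨Nat.findGreatest (fun k => k ∉ A) j,
                    Nat.findGreatest_spec (P := fun k => k ∉ A) (Nat.zero_le j) h0A,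
                    Nat.findGreatest_le j, ?_⟩
                  intro k hk1 hk2
                  by_contra h
                  exact Nat.findGreatest_is_greatest (P := fun k => k ∉ A) hk1 hk2 h
                have hmne : m ≠ j := fun h => hmspec (h ▸ hj)
                have hm1j : m + 1 ≤ j := by omega
                have hm1A : m + 1 ∈ A := hmgr (m + 1) (lt_add_one m) hm1j
                have hi0B : m + 1 ∈ B := ⟨hm1A, by simpa using hmspec⟩
                have heq : A.indicator (fun j => ENNReal.ofReal (π j)) j =
                    Set.indicator {j' | m + 1 ≤ j'} (fun j => ENNReal.ofReal (π j)) j := by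
                  rw [Set.indicator_of_mem hj,
                    Set.indicator_of_mem (show j ∈ {j' | m + 1 ≤ j'} from hm1j)]
                rw [heq]
                exact ENNReal.le_tsum (⟨m + 1, hi0B⟩ : ↥B)
              · simp [Set.indicator_of_notMem hj]
          _ = ∑' i : ↥B, ∑' j,
              Set.indicator {j' | (↑i : ℕ) ≤ j'} (fun j => ENNReal.ofReal (π j)) j :=
              ENNReal.tsum_comm
          _ = ∑' i : ↥B, ENNReal.ofReal (T ↑i) := by
              refine tsum_congr fun i => ?_
              rw [← hπm_tail, hπmdef]
      calc ENNReal.ofReal c * πm A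
          ≤ ENNReal.ofReal c * ∑' i : ↥B, ENNReal.ofReal (T ↑i) :=
            mul_le_mul_right mlb _
        _ = ∑' i : ↥B, ENNReal.ofReal c * ENNReal.ofReal (T ↑i) :=
            ENNReal.tsum_mul_left.symm
        _ = ∑' i : ↥B, ENNReal.ofReal (c * T ↑i) :=
            tsum_congr fun i => (ENNReal.ofReal_mul hc.le).symm
        _ ≤ ∑' i : ↥B, ENNReal.ofReal (w ↑i) :=
            ENNReal.tsum_le_tsum fun i =>
              ENNReal.ofReal_le_ofReal (hcw ↑i (hB1 ↑i i.2))
        _ ≤ flux A := flb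
  · -- converse direction
    intro hk0
    set K := min k' 1 with hK
    have hKne0 : K ≠ 0 := (lt_min hk0 zero_lt_one).ne'
    have hKnetop : K ≠ ⊤ := by
      refine ne_top_of_le_ne_top ?_ (min_le_right k' 1)
      exact ENNReal.one_ne_top
    set r := K.toReal with hr
    have hrpos : 0 < r := ENNReal.toReal_pos hKne0 hKnetop
    have hrK : ENNReal.ofReal r = K := ENNReal.ofReal_toReal hKnetop
    have hrk' : ENNReal.ofReal r ≤ k' := hrK ▸ min_le_left _ _
    -- partial sums tend to 1
    have hs : Filter.Tendsto (fun n => ∑ j ∈ Finset.range n, π j)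
        Filter.atTop (nhds 1) := by
      have := hπsum.hasSum.tendsto_sum_nat
      rwa [hπ1] at this
    obtain ⟨N, hN⟩ : ∃ N, ∀ n ≥ N, (1 / 2 : ℝ) ≤ ∑ j ∈ Finset.range n, π j := by
      have h := hs.eventually (eventually_ge_nhds (show (1 / 2 : ℝ) < 1 by norm_num))
      exact Filter.eventually_atTop.mp h
    have hTpart : ∀ i, T i + ∑ j ∈ Finset.range i, π j = 1 := by
      intro i
      have hsum2 : Summable (fun j => if j < i then π j else 0) :=
        summable_of_ne_finset_zero (s := Finset.range i)
          (fun j hj => if_neg (fun h => hj (Finset.mem_range.mpr h)))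
      have hsplit : (∑' j, π j) =
          T i + ∑' j, (if j < i then π j else 0) := by
        rw [hTdef, ← Summable.tsum_add (hTsum i) hsum2]
        refine tsum_congr fun j => ?_
        by_cases h : i ≤ j
        · simp [h, Nat.lt_of_lt_of_le, not_lt.mpr h]
        · simp [h, not_le.mp h]
      rw [hπ1] at hsplit
      rw [hsplit]
      congr 1
      rw [tsum_eq_sum (s := Finset.range i)
        (fun j hj => if_neg (fun h => hj (Finset.mem_range.mpr h)))]
      exact Finset.sum_congr rfl
        (fun j hj => (if_pos (Finset.mem_range.mp hj)).symm)
    have hT_le1 : ∀ i, T i ≤ 1 := by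
      intro i
      have h := hTpart i
      have h2 : 0 ≤ ∑ j ∈ Finset.range i, π j :=
        Finset.sum_nonneg fun j _ => hπ0 j
      linarith
    have hT_half : ∀ i, N ≤ i → T i ≤ 1 / 2 := by
      intro i hi
      have h := hTpart i
      have h2 := hN i hi
      linarith
    have htail : ∀ i, 1 ≤ i → T i ≤ 1 / 2 → r * T i ≤ w i := by
      intro i hi1 hihalf
      set A := {j | i ≤ j} with hA
      have hπmA : πm A = ENNReal.ofReal (T i) := hπm_tail i
      have hpos : 0 < πm A := by
        rw [hπmA]; exact ENNReal.ofReal_pos.mpr (hTpos i)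
      have hhalf : πm A ≤ 1 / 2 := by
        rw [hπmA, ← hhalf_eq]
        exact ENNReal.ofReal_le_ofReal hihalf
      have hk'le : k' ≤ flux A / πm A := by
        rw [hk']
        exact iInf₂_le A ⟨hpos, hhalf⟩
      have hfluxA : flux A = ENNReal.ofReal (w i) := by
        rw [hflux]
        have hiA : i ∈ A := le_refl i
        have hi1A : i - 1 ∈ Aᶜ := by
          simp only [hA, Set.mem_compl_iff, Set.mem_setOf_eq]; omega
        have houter : ∀ p : ↥A, p ≠ (⟨i, hiA⟩ : ↥A) →
            (∑' q : ↥Aᶜ, ENNReal.ofReal (Jα ↑p ↑q)) = 0 := by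
          intro p hp
          have hpi : i < ↑p := lt_of_le_of_ne p.2
            (fun h => hp (Subtype.ext h.symm))
          refine ENNReal.tsum_eq_zero.mpr fun q => ?_
          have hq : ¬ i ≤ ↑q := q.2
          rw [hJα, if_neg (by omega), if_neg (by omega)]
          simp
        rw [tsum_eq_single _ houter]
        have hinner : ∀ q : ↥Aᶜ, q ≠ (⟨i - 1, hi1A⟩ : ↥Aᶜ) →
            ENNReal.ofReal (Jα i ↑q) = 0 := by
          intro q hq
          have hqne : (↑q : ℕ) ≠ i - 1 := fun h => hq (Subtype.ext h)
          have hqlt : ¬ i ≤ ↑q := q.2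
          rw [hJα, if_neg (by omega), if_neg (by omega)]
          simp
        rw [tsum_eq_single _ hinner]
        rw [hJup i hi1]
      have hmul : ENNReal.ofReal r * πm A ≤ flux A :=
        (ENNReal.le_div_iff_mul_le (Or.inl hpos.ne')
          (Or.inl (by rw [hπmA]; exact ENNReal.ofReal_ne_top))).mp
          (hrk'.trans hk'le)
      rw [hπmA, hfluxA, ← ENNReal.ofReal_mul hrpos.le] at hmul
      exact (ENNReal.ofReal_le_ofReal_iff (hwpos i hi1).le).mp hmul
    set N' := max N 1 with hN'
    have hIcc_ne : (Finset.Icc 1 N').Nonempty :=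
      ⟨1, Finset.mem_Icc.mpr ⟨le_refl 1, le_max_right N 1⟩⟩
    set m := (Finset.Icc 1 N').inf' hIcc_ne w with hm
    have hmpos : 0 < m := by
      rw [hm, Finset.lt_inf'_iff]
      intro i hi
      exact hwpos i (Finset.mem_Icc.mp hi).1
    refine ⟨min r m, lt_min hrpos hmpos, ?_⟩
    intro i hi1
    show min r m * T i ≤ w i
    by_cases hcase : T i ≤ 1 / 2
    · calc min r m * T i ≤ r * T i :=
          mul_le_mul_of_nonneg_right (min_le_left _ _) (hT0 i)
        _ ≤ w i := htail i hi1 hcase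
    · have hiN : i ≤ N' := by
        by_contra h
        push_neg at h
        exact hcase (hT_half i (le_trans (le_max_left N 1) h.le))
      have hwi : min r m ≤ w i :=
        le_trans (min_le_right _ _)
          (Finset.inf'_le w (Finset.mem_Icc.mpr ⟨hi1, hiN⟩))
      calc min r m * T i ≤ min r m * 1 :=
          mul_le_mul_of_nonneg_left (hT_le1 i) (lt_min hrpos hmpos).le
        _ = min r m := mul_one _
        _ ≤ w i := hwi
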